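/- Let F be the category of finite sets and Σ ⊆ F the subcategory of bijections. For symmetric sequences X and Y in a cocomplete closed symmetric monoidal category V, the composition product (Y ∘ X)(I) = colim over bijections of (J ↦ Y(J) ⊗ ⊗_{j∈J} X(f^{-1}(j))), where the colimit is over maps f : I → J, defines a monoidal structure on symmetric sequences whose unit is the symmetric sequence J with J(I) = 1_V if |I| = 1 and the initial object otherwise. In particular, J ∘ X ≅ X ≅ X ∘ J for every symmetric sequence X. -/

import Mathlib

/-- A symmetric sequence in `Type`: a functor on the groupoid of (finite) sets and
bijections, given by its values together with a functorial action of bijections. -/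
structure SymSeq where
  obj : Type → Type
  map : ∀ {I J : Type}, I ≃ J → obj I → obj J
  map_refl : ∀ {I : Type} (x : obj I), map (Equiv.refl I) x = x
  map_trans : ∀ {I J K : Type} (e : I ≃ J) (e' : J ≃ K) (x : obj I),
    map e' (map e x) = map (e.trans e') x

/-- The terms of the colimit defining the composition product
`(Y ∘ X)(I) = colim_{f : I → J} Y(J) ⊗ ⊗_{j ∈ J} X(f⁻¹(j))`. -/
def CompBase (Y X : SymSeq) (I : Type) : Type 1 :=
  Σ (J : Type) (f : I → J), Y.obj J × ∀ j : J, X.obj {i // f i = j}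

/-- The relation identifying terms of the colimit along bijections of the target `J`. -/
def SymSeqCompRel (Y X : SymSeq) (I : Type) : CompBase Y X I → CompBase Y X I → Prop :=
  fun a b => ∃ e : a.1 ≃ b.1,
    ∃ h : ∀ i, e (a.2.1 i) = b.2.1 i,
      b.2.2.1 = Y.map e a.2.2.1 ∧
        ∀ j : b.1, b.2.2.2 j =
          X.map (Equiv.subtypeEquiv (Equiv.refl I) (fun i => by
            rw [Equiv.refl_apply, ← h i]; exact e.eq_symm_apply)) (a.2.2.2 (e.symm j))

/-- The composition product of symmetric sequences, `(Y ∘ X)(I)`. -/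
def compProd (Y X : SymSeq) (I : Type) : Type 1 := Quot (SymSeqCompRel Y X I)

/-- The unit symmetric sequence `J`, concentrated in arity one (with value the monoidal
unit, i.e. a point, on one-element sets, and empty otherwise). -/
def unitSeq : SymSeq where
  obj I := PLift (∃ i : I, ∀ x, x = i)
  map e x := ⟨⟨e x.down.choose, fun y => by
    rw [← e.apply_symm_apply y, x.down.choose_spec (e.symm y)]⟩⟩
  map_refl _ := Subsingleton.elim _ _
  map_trans _ _ _ := Subsingleton.elim _ _

lemma map_eqv_congr (X : SymSeq) {A B : Type} {e e' : A ≃ B} (h : e = e') (x : X.obj A) :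
    X.map e x = X.map e' x := by rw [h]

lemma aux_cast (X : SymSeq) {I J : Type} (f : I → J) (x : ∀ j : J, X.obj {i // f i = j})
    {j j' : J} (h : j = j') (E : {i // f i = j} ≃ I) (E' : {i // f i = j'} ≃ I)
    (hE : ∀ a, E a = a.1) (hE' : ∀ a, E' a = a.1) :
    X.map E (x j) = X.map E' (x j') := by
  subst h
  exact map_eqv_congr X (Equiv.ext fun a => by rw [hE, hE']) _

noncomputable def toX (X : SymSeq) (I : Type) : CompBase unitSeq X I → X.obj I :=
  fun a => X.map (Equiv.subtypeUnivEquiv (fun i => a.2.2.1.down.choose_spec (a.2.1 i)))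
    (a.2.2.2 a.2.2.1.down.choose)

lemma toX_rel (X : SymSeq) (I : Type) (a b : CompBase unitSeq X I)
    (r : SymSeqCompRel unitSeq X I a b) : toX X I a = toX X I b := by
  obtain ⟨Ja, fa, ya, xa⟩ := a
  obtain ⟨Jb, fb, yb, xb⟩ := b
  obtain ⟨e, h, hy, hx⟩ := r
  unfold toX
  dsimp only at *
  rw [hx yb.down.choose, X.map_trans]
  exact aux_cast X fa xa (ya.down.choose_spec (e.symm yb.down.choose)).symm _ _
    (fun _ => rfl) (fun _ => rfl)
lemma unit_sub (J : Type) : Subsingleton (unitSeq.obj J) := by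
  dsimp [unitSeq]; infer_instance

lemma aux_cast2 (X : SymSeq) {I J B : Type} (f : I → J) (x : ∀ j : J, X.obj {i // f i = j})
    {j j' : J} (h : j = j') (E : {i // f i = j} ≃ B) (E' : {i // f i = j'} ≃ B)
    (hE : ∀ (a : I) (p : f a = j) (p' : f a = j'), E ⟨a, p⟩ = E' ⟨a, p'⟩) :
    X.map E (x j) = X.map E' (x j') := by
  subst h
  exact map_eqv_congr X (Equiv.ext fun a => hE a.1 a.2 a.2) _

noncomputable def canon1 (X : SymSeq) (I : Type) (x : X.obj I) : CompBase unitSeq X I :=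
  ⟨PUnit, fun _ => PUnit.unit, ⟨⟨PUnit.unit, fun _ => rfl⟩⟩,
    fun j => X.map (Equiv.subtypeUnivEquiv (fun _ => Subsingleton.elim _ j)).symm x⟩

noncomputable def equiv1 (X : SymSeq) (I : Type) : compProd unitSeq X I ≃ X.obj I where
  toFun := Quot.lift (toX X I) (toX_rel X I)
  invFun x := Quot.mk _ (canon1 X I x)
  left_inv := by
    apply Quot.ind
    intro a
    obtain ⟨Ja, fa, ya, xa⟩ := a
    dsimp only
    refine (Quot.sound ?_).symm
    refine ⟨⟨fun _ => PUnit.unit, fun _ => ya.down.choose,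
      fun j => (ya.down.choose_spec j).symm, fun _ => rfl⟩, fun _ => rfl,
      @Subsingleton.elim _ (unit_sub _) _ _, fun j => ?_⟩
    show X.map _ (toX X I ⟨Ja, fa, ya, xa⟩) = _
    unfold toX
    dsimp only
    rw [X.map_trans]
    exact aux_cast2 X fa xa rfl _ _ (fun a p p' => Subtype.ext rfl)
  right_inv x := by
    dsimp only
    show X.map _ (X.map _ x) = x
    refine (X.map_trans _ _ x).trans ?_
    refine Eq.trans ?_ (X.map_refl x)
    exact map_eqv_congr X (Equiv.ext fun i => rfl) x
/-- The bijection `I ≃ J` extracted from a map whose fibers are all singletons. -/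
noncomputable def bijOf {I J : Type} (f : I → J)
    (u : ∀ j : J, ∃ i0 : {i // f i = j}, ∀ x, x = i0) : I ≃ J where
  toFun := f
  invFun j := ((u j).choose : {i // f i = j}).1
  left_inv i := congrArg Subtype.val ((u (f i)).choose_spec ⟨i, rfl⟩).symm
  right_inv j := ((u j).choose).2

noncomputable def toX2 (X : SymSeq) (I : Type) : CompBase X unitSeq I → X.obj I :=
  fun a => X.map (bijOf a.2.1 (fun j => (a.2.2.2 j).down)).symm a.2.2.1

lemma toX2_rel (X : SymSeq) (I : Type) (a b : CompBase X unitSeq I)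
    (r : SymSeqCompRel X unitSeq I a b) : toX2 X I a = toX2 X I b := by
  obtain ⟨Ja, fa, xa, ua⟩ := a
  obtain ⟨Jb, fb, xb, ub⟩ := b
  obtain ⟨e, h, hx, -⟩ := r
  unfold toX2
  dsimp only at *
  rw [hx, X.map_trans]
  refine (map_eqv_congr X (Equiv.ext fun i => ?_) xa).symm
  have hb : bijOf fb (fun j => (ub j).down)
      = (bijOf fa (fun j => (ua j).down)).trans e := Equiv.ext fun i => (h i).symm
  rw [hb]
  simp

noncomputable def canon2 (X : SymSeq) (I : Type) (x : X.obj I) : CompBase X unitSeq I :=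
  ⟨I, id, x, fun j => ⟨⟨⟨j, rfl⟩, fun y => Subtype.ext y.2⟩⟩⟩

noncomputable def equiv2 (X : SymSeq) (I : Type) : compProd X unitSeq I ≃ X.obj I where
  toFun := Quot.lift (toX2 X I) (toX2_rel X I)
  invFun x := Quot.mk _ (canon2 X I x)
  left_inv := by
    apply Quot.ind
    intro a
    obtain ⟨Ja, fa, xa, ua⟩ := a
    dsimp only
    refine (Quot.sound ?_).symm
    refine ⟨(bijOf fa (fun j => (ua j).down)).symm,
      fun i => (bijOf fa (fun j => (ua j).down)).symm_apply_apply i, rfl,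
      fun j => @Subsingleton.elim _ (unit_sub _) _ _⟩
  right_inv x := by
    dsimp only
    show X.map _ x = x
    refine Eq.trans ?_ (X.map_refl x)
    exact map_eqv_congr X (Equiv.ext fun i => (((canon2 X I x).2.2.2 i).down.choose).2) x

/-- the composition product of symmetric sequences is unital with unit the
symmetric sequence `J` concentrated in arity one: `J ∘ X ≅ X ≅ X ∘ J` for every
symmetric sequence `X`. -/
theorem stmt_8 (X : SymSeq) (I : Type) :
    Nonempty (compProd unitSeq X I ≃ X.obj I) ∧
      Nonempty (compProd X unitSeq I ≃ X.obj I) := by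
  exact ⟨⟨equiv1 X I⟩, ⟨equiv2 X I⟩⟩
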